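/- Let B > 1, let f : ℝ → ℝ be differentiable and convex on (0, ∞), let μ be a measure on a measurable space X, and let d*, dU : X → ℝ be measurable with d* ≥ 0, dU > 0 pointwise, both integrable with ∫ d* dμ = ∫ dU dμ = 1. If d*(x) ≤ B·dU(x) for every x ∈ X, then D_{f̃_B}(d*‖dU) = 0; consequently, for every measurable d : X → ℝ with d ≥ 0, ∫ d dμ = 1 and x ↦ dU(x)·f̃_B(d(x)/dU(x)) μ-integrable, one has D_{f̃_B}(d*‖dU) ≤ D_{f̃_B}(d‖dU), i.e. d* attains the minimum of the relaxed f-divergence to dU. -/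

import Mathlib

open MeasureTheory

/-- The asymmetrically-relaxed function `f̃_β`. -/
noncomputable def relaxed (f : ℝ → ℝ) (β : ℝ) (u : ℝ) : ℝ :=
  if β ≤ u then f u + (-(f β) + deriv f β * (β - 1))
  else deriv f β * u - deriv f β

lemma relaxed_ge (f : ℝ → ℝ) {B : ℝ} (hB : 0 < B)
    (hdiff : DifferentiableOn ℝ f (Set.Ioi 0))
    (hconv : ConvexOn ℝ (Set.Ioi 0) f) (u : ℝ) :
    deriv f B * u - deriv f B ≤ relaxed f B u := by
  unfold relaxed
  split_ifs with h
  · rcases eq_or_lt_of_le h with rfl | h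
    · ring_nf; exact le_rfl
    · have hdB : DifferentiableAt ℝ f B :=
        (hdiff B hB).differentiableAt (isOpen_Ioi.mem_nhds hB)
      have := hconv.deriv_le_slope (Set.mem_Ioi.mpr hB)
        (Set.mem_Ioi.mpr (hB.trans h)) h hdB
      rw [slope_def_field, le_div_iff₀ (by linarith)] at this
      nlinarith
  · exact le_rfl

theorem stmt5 {X : Type*} [MeasurableSpace X] (μ : Measure X)
    (B : ℝ) (hB : 1 < B) (f : ℝ → ℝ)
    (hdiff : DifferentiableOn ℝ f (Set.Ioi 0))
    (hconv : ConvexOn ℝ (Set.Ioi 0) f)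
    (dstar dU : X → ℝ) (hdstarm : Measurable dstar) (hdUm : Measurable dU)
    (hdstar0 : ∀ x, 0 ≤ dstar x) (hdU0 : ∀ x, 0 < dU x)
    (hdstarint : Integrable dstar μ) (hdUint : Integrable dU μ)
    (hdstarsum : ∫ x, dstar x ∂μ = 1) (hdUsum : ∫ x, dU x ∂μ = 1)
    (hconc : ∀ x, dstar x ≤ B * dU x) :
    ∫ x, dU x * relaxed f B (dstar x / dU x) ∂μ = 0 ∧
    ∀ d : X → ℝ, Measurable d → (∀ x, 0 ≤ d x) → ∫ x, d x ∂μ = 1 →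
      Integrable (fun x => dU x * relaxed f B (d x / dU x)) μ →
      ∫ x, dU x * relaxed f B (dstar x / dU x) ∂μ ≤
        ∫ x, dU x * relaxed f B (d x / dU x) ∂μ := by
  have hB0 : (0:ℝ) < B := by linarith
  -- pointwise formula for dstar
  have hpt : ∀ x, dU x * relaxed f B (dstar x / dU x)
      = deriv f B * dstar x - deriv f B * dU x := by
    intro x
    have hU := hdU0 x
    have hle : dstar x / dU x ≤ B := (div_le_iff₀ hU).mpr (by linarith [hconc x])
    unfold relaxed
    rcases lt_or_eq_of_le hle with h | h
    · rw [if_neg (not_le.mpr h)]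
      field_simp
    · rw [h, if_pos le_rfl]
      ring_nf
      have : dstar x = B * dU x := by
        field_simp at h; linarith
      rw [this]; ring
  have hzero : ∫ x, dU x * relaxed f B (dstar x / dU x) ∂μ = 0 := by
    simp_rw [hpt]
    rw [integral_sub (hdstarint.const_mul _) (hdUint.const_mul _),
      integral_const_mul, integral_const_mul, hdstarsum, hdUsum]
    ring
  refine ⟨hzero, ?_⟩
  intro d hdm hd0 hdsum hdint
  rw [hzero]
  have hmono : ∀ x, deriv f B * d x - deriv f B * dU x
      ≤ dU x * relaxed f B (d x / dU x) := by
    intro x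
    have hU := hdU0 x
    have := relaxed_ge f hB0 hdiff hconv (d x / dU x)
    calc deriv f B * d x - deriv f B * dU x
        = dU x * (deriv f B * (d x / dU x) - deriv f B) := by field_simp
      _ ≤ dU x * relaxed f B (d x / dU x) := by
          exact mul_le_mul_of_nonneg_left this hU.le
  have hdint' : Integrable d μ := by
    by_contra h
    rw [integral_undef h] at hdsum
    norm_num at hdsum
  have hlbint : Integrable (fun x => deriv f B * d x - deriv f B * dU x) μ :=
    (hdint'.const_mul _).sub (hdUint.const_mul _)
  have hle := integral_mono hlbint hdint hmono
  rw [integral_sub (hdint'.const_mul _) (hdUint.const_mul _),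
    integral_const_mul, integral_const_mul, hdsum, hdUsum] at hle
  linarith
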